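/- Let X be a one-sided shift of finite type and f ∈ Hom(𝒢_X, ℤ) a continuous groupoid homomorphism such that f((x, lp(x), x)) ≥ 0 for every eventually periodic point x ∈ X. Then there exists h ∈ C(X, ℤ) such that f((x, 1, σ(x))) + h(x) − h(σ(x)) ≥ 0 for all x ∈ X; that is, the class of x ↦ f((x, 1, σ(x))) lies in the positive cone H^X_+ = {[g] ∈ H^X : ∃ representative g' with g'(x) ≥ 0 for all x}. -/

import Mathlib

/-- The one-sided shift map on `ℕ → A`. -/
def shift {A : Type*} (x : ℕ → A) : ℕ → A := fun n => x (n + 1)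

/-- A finite word appears in the shift space `X`. -/
def Appears {A : Type*} (X : Set (ℕ → A)) (w : List A) : Prop :=
  ∃ x ∈ X, ∀ i : Fin w.length, x i.val = w.get i

/-- `X` is a shift of finite type. -/
def IsSFT {A : Type*} (X : Set (ℕ → A)) : Prop :=
  ∃ m : ℕ, 0 < m ∧ ∀ u v w : List A, v.length = m →
    Appears X (u ++ v) → Appears X (v ++ w) → Appears X (u ++ v ++ w)

/-- The Deaconu–Renault groupoid `𝒢_X` of a one-sided shift of finite type,
as a subset of `X × ℤ × X`. An element is written `(x, n, x')` with
`n = i - j` and `σ^i(x) = σ^j(x')`. -/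
def GX {A : Type*} (X : Set (ℕ → A)) : Set ((ℕ → A) × ℤ × (ℕ → A)) :=
  {g | g.1 ∈ X ∧ g.2.2 ∈ X ∧
    ∃ i j : ℕ, g.2.1 = (i : ℤ) - (j : ℤ) ∧ shift^[i] g.1 = shift^[j] g.2.2}

/-- The basic (open) sets generating the étale topology of `𝒢_X`. -/
def IsBasicG {A : Type*} [TopologicalSpace A] (S : Set ((ℕ → A) × ℤ × (ℕ → A))) : Prop :=
  ∃ (i j : ℕ) (U U' : Set (ℕ → A)), IsOpen U ∧ IsOpen U' ∧
    S = {g | g.1 ∈ U ∧ g.2.2 ∈ U' ∧ g.2.1 = (i : ℤ) - (j : ℤ) ∧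
      shift^[i] g.1 = shift^[j] g.2.2}

/-- `F` represents a continuous groupoid homomorphism `𝒢_X → ℤ`: it is locally
constant on `𝒢_X` (with respect to the basic sets), inverts under inversion and
is additive on composable pairs. -/
def GrpdHom {A : Type*} [TopologicalSpace A]
    (X : Set (ℕ → A)) (F : (ℕ → A) × ℤ × (ℕ → A) → ℤ) : Prop :=
  (∀ γ ∈ GX X, ∃ S, IsBasicG S ∧ γ ∈ S ∧ ∀ γ' ∈ S ∩ GX X, F γ' = F γ) ∧
  (∀ x n x', (x, n, x') ∈ GX X → F (x', -n, x) = -F (x, n, x')) ∧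
  (∀ x n x' n' x'', (x, n, x') ∈ GX X → (x', n', x'') ∈ GX X →
    F (x, n + n', x'') = F (x, n, x') + F (x', n', x''))


/-- `x` is eventually periodic. -/
def EvPeriodic {A : Type*} (x : ℕ → A) : Prop :=
  ∃ m p : ℕ, 0 < p ∧ shift^[m + p] x = shift^[m] x

/-- The least period `lp(x)` of an eventually periodic point. -/
noncomputable def leastPeriod {A : Type*} (x : ℕ → A) : ℕ :=
  sInf {p | 0 < p ∧ ∃ a b : ℕ, p + b = a ∧ shift^[a] x = shift^[b] x}


namespace S15

variable {A : Type*}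

lemma shift_iter (x : ℕ → A) (a k : ℕ) : shift^[a] x k = x (k + a) := by
  induction a generalizing k with
  | zero => rfl
  | succ a ih =>
    rw [Function.iterate_succ_apply']
    show shift^[a] x (k + 1) = x (k + (a + 1))
    rw [ih]
    congr 1; omega

lemma iterX {X : Set (ℕ → A)} (hinv : ∀ x ∈ X, shift x ∈ X) (x : ℕ → A) (hx : x ∈ X)
    (t : ℕ) : shift^[t] x ∈ X := by
  induction t with
  | zero => exact hx
  | succ t ih => rw [Function.iterate_succ_apply']; exact hinv _ ih

lemma memX_of_agree [TopologicalSpace A] {X : Set (ℕ → A)} (hcl : IsClosed X)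
    (z : ℕ → A) (h : ∀ L : ℕ, ∃ x ∈ X, ∀ k < L, x k = z k) : z ∈ X := by
  rw [← hcl.closure_eq, mem_closure_iff]
  intro O hO hzO
  obtain ⟨I, u, hIu, hsub⟩ := isOpen_pi_iff.1 hO z hzO
  obtain ⟨x, hxX, hagree⟩ := h ((I.sup id) + 1)
  refine ⟨x, hsub ?_, hxX⟩
  intro a ha
  have ha' : a ∈ I := ha
  rw [hagree a (Nat.lt_succ_of_le (Finset.le_sup (f := id) ha'))]
  exact (hIu a ha').2

def wordOf (q : ℕ → A) (c L : ℕ) : List A := List.ofFn (fun i : Fin L => q (c + i))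

@[simp] lemma wordOf_length (q : ℕ → A) (c L : ℕ) : (wordOf q c L).length = L :=
  List.length_ofFn

lemma wordOf_getElem (q : ℕ → A) (c L : ℕ) (i : ℕ) (hi : i < (wordOf q c L).length) :
    (wordOf q c L)[i] = q (c + i) := by
  simp [wordOf]

lemma wordOf_append (q : ℕ → A) (c L1 L2 : ℕ) :
    wordOf q c L1 ++ wordOf q (c + L1) L2 = wordOf q c (L1 + L2) := by
  apply List.ext_getElem
  · simp
  intro i h1 h2
  rcases Nat.lt_or_ge i L1 with h | h
  · rw [List.getElem_append_left (by simpa using h)]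
    rw [wordOf_getElem, wordOf_getElem]
  · rw [List.getElem_append_right (by simpa using h)]
    rw [wordOf_getElem, wordOf_getElem]
    congr 1
    simp
    omega

lemma appears_wordOf_iff {X : Set (ℕ → A)} (q : ℕ → A) (c L : ℕ) :
    Appears X (wordOf q c L) ↔ ∃ x ∈ X, ∀ k < L, x k = q (c + k) := by
  constructor
  · rintro ⟨x, hx, hag⟩
    refine ⟨x, hx, fun k hk => ?_⟩
    have := hag ⟨k, by simpa using hk⟩
    simpa [wordOf, List.get_ofFn] using this
  · rintro ⟨x, hx, hag⟩
    refine ⟨x, hx, fun i => ?_⟩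
    have hi : (i : ℕ) < L := by simpa using i.isLt
    have := hag _ hi
    rw [this, List.get_eq_getElem, wordOf_getElem]

lemma cyl_open [TopologicalSpace A] [DiscreteTopology A] (w : ℕ → A) (c : ℕ) :
    IsOpen {y : ℕ → A | ∀ k < c, y k = w k} := by
  have he : {y : ℕ → A | ∀ k < c, y k = w k} =
      ⋂ k ∈ Finset.range c, (fun y : ℕ → A => y k) ⁻¹' {w k} := by
    ext y; simp [Finset.mem_range]
  rw [he]
  exact isOpen_biInter_finset fun k _ =>
    (continuous_apply k).isOpen_preimage _ (isOpen_discrete _)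

lemma sum_split (g : ℕ → ℤ) (a b : ℕ) :
    ∑ l ∈ Finset.range (a + b), g l =
      (∑ l ∈ Finset.range a, g l) + ∑ l ∈ Finset.range b, g (a + l) := by
  induction b with
  | zero => simp
  | succ b ih => rw [show a + (b+1) = (a+b)+1 from rfl, Finset.sum_range_succ,
      Finset.sum_range_succ, ih]; ring

lemma shift_continuous [TopologicalSpace A] : Continuous (shift (A := A)) :=
  continuous_pi fun n => continuous_apply (n + 1)


section Glue

variable {A : Type*} {X : Set (ℕ → A)} {m0 m : ℕ}

lemma glue (hm : m0 ≤ m)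
    (hsft0 : ∀ u v w : List A, v.length = m0 →
      Appears X (u ++ v) → Appears X (v ++ w) → Appears X (u ++ v ++ w))
    (hinv : ∀ x ∈ X, shift x ∈ X)
    {y1 y2 : ℕ → A} (hy1 : y1 ∈ X) (hy2 : y2 ∈ X) (a : ℕ)
    (hov : ∀ k < m, y1 (a + k) = y2 k) (L : ℕ) :
    ∃ x ∈ X, (∀ k < a, x k = y1 k) ∧ (∀ k < m + L, x (a + k) = y2 k) := by
  classical
  set s : ℕ → A := fun k => if k < a then y1 k else y2 (k - a) with hs
  have hsy1 : ∀ k < a, s k = y1 k := by intro k hk; simp [hs, hk]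
  have hsy2 : ∀ k, s (a + k) = y2 k := by
    intro k
    have h1 : ¬ (a + k < a) := by omega
    simp [hs, h1]
  have h1 : Appears X (wordOf s 0 (a + (m - m0)) ++ wordOf s (0 + (a + (m - m0))) m0) := by
    rw [wordOf_append]
    rw [show a + (m - m0) + m0 = a + m from by omega]
    rw [appears_wordOf_iff]
    refine ⟨y1, hy1, fun k hk => ?_⟩
    rw [zero_add]
    rcases Nat.lt_or_ge k a with h' | h'
    · exact (hsy1 k h').symm
    · rw [show k = a + (k - a) from by omega, hsy2]
      exact hov (k - a) (by omega)
  have h2 : Appears X (wordOf s (0 + (a + (m - m0))) m0 ++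
      wordOf s (0 + (a + (m - m0)) + m0) L) := by
    rw [wordOf_append, appears_wordOf_iff]
    refine ⟨shift^[m - m0] y2, iterX hinv _ hy2 _, fun k hk => ?_⟩
    rw [shift_iter]
    rw [show 0 + (a + (m - m0)) + k = a + ((m - m0) + k) from by omega, hsy2]
    congr 1; omega
  have h3 := hsft0 _ _ _ (wordOf_length s _ m0) h1 h2
  rw [List.append_assoc, wordOf_append, wordOf_append] at h3
  rw [show a + (m - m0) + (m0 + L) = a + m + L from by omega] at h3
  rw [appears_wordOf_iff] at h3
  obtain ⟨x, hxX, hag⟩ := h3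
  refine ⟨x, hxX, fun k hk => ?_, fun k hk => ?_⟩
  · rw [hag k (by omega), zero_add]; exact hsy1 k hk
  · rw [hag (a + k) (by omega), zero_add]; exact hsy2 k

lemma cycle_nonneg [TopologicalSpace A] (hcl : IsClosed X) (hm : m0 ≤ m)
    (hsft0 : ∀ u v w : List A, v.length = m0 →
      Appears X (u ++ v) → Appears X (v ++ w) → Appears X (u ++ v ++ w))
    (hinv : ∀ x ∈ X, shift x ∈ X)
    (f : (ℕ → A) → ℤ)
    (hfm : ∀ x ∈ X, ∀ y ∈ X, (∀ k < m, x k = y k) → f x = f y)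
    (hcyc : ∀ y ∈ X, ∀ p, 0 < p → shift^[p] y = y →
      0 ≤ ∑ l ∈ Finset.range p, f (shift^[l] y))
    {y : ℕ → A} (hy : y ∈ X) (i p : ℕ) (hp : 0 < p)
    (hov : ∀ k < m, y (i + k) = y (i + p + k)) :
    0 ≤ ∑ l ∈ Finset.range p, f (shift^[i + l] y) := by
  classical
  set q : ℕ → A := fun k => y (i + k % p) with hq
  have key : ∀ s, s < p + m → y (i + s) = q s := by
    intro s
    induction s using Nat.strong_induction_on with
    | _ s ih =>
      intro hs
      rcases Nat.lt_or_ge s p with h | h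
      · simp [hq, Nat.mod_eq_of_lt h]
      · have h1 : y (i + s) = y (i + (s - p)) := by
          have h2 := (hov (s - p) (by omega)).symm
          rw [show i + s = i + p + (s - p) from by omega]
          exact h2
        rw [h1, ih (s - p) (by omega) (by omega)]
        show y (i + (s - p) % p) = y (i + s % p)
        rw [Nat.mod_eq_sub_mod h]
  have hqper : ∀ k, q (k + p) = q k := by
    intro k; simp only [hq]; rw [Nat.add_mod_right]
  have hqmul : ∀ (d k : ℕ), q (k + d * p) = q k := by
    intro d
    induction d with
    | zero => simp
    | succ d ih =>
      intro k
      rw [show k + (d+1) * p = (k + d * p) + p from by ring, hqper, ih]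
  have hqX : q ∈ X := by
    apply memX_of_agree hcl
    have claim : ∀ c : ℕ, ∃ x ∈ X, ∀ k < c * p + (p + m), x k = q k := by
      intro c
      induction c with
      | zero =>
        refine ⟨shift^[i] y, iterX hinv _ hy _, fun k hk => ?_⟩
        rw [shift_iter, show k + i = i + k from by omega]
        exact key k (by omega)
      | succ c ih =>
        obtain ⟨xc, hxc, hagc⟩ := ih
        have hcc : (c + 1) * p = c * p + p := by ring
        have hov2 : ∀ k < m, xc ((c+1) * p + k) = shift^[i] y k := by
          intro k hk
          rw [shift_iter, hagc _ (by omega)]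
          rw [show (c+1) * p + k = k + (c+1) * p from by omega, hqmul]
          rw [show k + i = i + k from by omega]
          exact (key k (by omega)).symm
        obtain ⟨x, hxX, hx1, hx2⟩ :=
          glue hm hsft0 hinv hxc (iterX hinv _ hy i) ((c+1) * p) hov2 p
        refine ⟨x, hxX, fun k hk => ?_⟩
        rcases Nat.lt_or_ge k ((c+1) * p) with h' | h'
        · rw [hx1 k h', hagc k (by omega)]
        · rw [show k = (c+1) * p + (k - (c+1) * p) from by omega,
            hx2 _ (by omega), shift_iter]
          rw [show k - (c+1)*p + i = i + (k - (c+1)*p) from by omega]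
          rw [key _ (by omega)]
          rw [show (c+1) * p + (k - (c+1) * p) = (k - (c+1) * p) + (c+1) * p from by omega,
            hqmul]
    intro L
    obtain ⟨x, hxX, hag⟩ := claim L
    have hLp : L ≤ L * p := Nat.le_mul_of_pos_right L hp
    exact ⟨x, hxX, fun k hk => hag k (by omega)⟩
  have hqperiodic : shift^[p] q = q := by
    funext k
    rw [shift_iter]
    exact hqper k
  have hfeq : ∀ l ∈ Finset.range p, f (shift^[l] q) = f (shift^[i + l] y) := by
    intro l hl
    have hl' := Finset.mem_range.1 hl
    apply hfm _ (iterX hinv q hqX l) _ (iterX hinv y hy (i + l))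
    intro t ht
    rw [shift_iter, shift_iter]
    have := key (l + t) (by omega)
    rw [show t + l = l + t from by omega, ← this]
    congr 1; omega
  calc (0:ℤ) ≤ ∑ l ∈ Finset.range p, f (shift^[l] q) := hcyc q hqX p hp hqperiodic
    _ = _ := Finset.sum_congr rfl hfeq

end Glue

section Reduce

variable {A : Type*} [Fintype A] [TopologicalSpace A] {X : Set (ℕ → A)} {m0 m : ℕ}

lemma reduce (hcl : IsClosed X) (hm : m0 ≤ m)
    (hsft0 : ∀ u v w : List A, v.length = m0 →
      Appears X (u ++ v) → Appears X (v ++ w) → Appears X (u ++ v ++ w))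
    (hinv : ∀ x ∈ X, shift x ∈ X)
    (f : (ℕ → A) → ℤ)
    (hfm : ∀ x ∈ X, ∀ y ∈ X, (∀ k < m, x k = y k) → f x = f y)
    (hcyc : ∀ y ∈ X, ∀ p, 0 < p → shift^[p] y = y →
      0 ≤ ∑ l ∈ Finset.range p, f (shift^[l] y)) :
    ∀ n (y : ℕ → A), y ∈ X →
      ∃ y2, y2 ∈ X ∧ ∃ n2, n2 ≤ Fintype.card (Fin m → A) ∧
        (∀ k, shift^[n2] y2 k = shift^[n] y k) ∧
        (∑ l ∈ Finset.range n2, f (shift^[l] y2)) ≤ ∑ l ∈ Finset.range n, f (shift^[l] y) := by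
  classical
  intro n
  induction n using Nat.strong_induction_on with
  | _ n ih =>
    intro y hy
    set N := Fintype.card (Fin m → A) with hN
    rcases le_or_gt n N with hn | hn
    · exact ⟨y, hy, n, hn, fun k => rfl, le_refl _⟩
    · have hcard : Fintype.card (Fin m → A) < Fintype.card (Fin (N + 1)) := by
        simp [hN]
      obtain ⟨a, b, hab, heq⟩ := Fintype.exists_ne_map_eq_of_card_lt
        (fun (t : Fin (N+1)) => (fun k : Fin m => y ((t : ℕ) + (k : ℕ)))) hcard
      obtain ⟨i, j, hij, hjN, hovij⟩ : ∃ i j : ℕ, i < j ∧ j ≤ N ∧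
          ∀ k < m, y (i + k) = y (j + k) := by
        rcases Nat.lt_trichotomy (a : ℕ) (b : ℕ) with h' | h' | h'
        · refine ⟨a, b, h', Nat.lt_succ_iff.1 b.isLt, fun k hk => ?_⟩
          exact congrFun heq ⟨k, hk⟩
        · exact absurd (Fin.ext h') hab
        · refine ⟨b, a, h', Nat.lt_succ_iff.1 a.isLt, fun k hk => ?_⟩
          exact (congrFun heq ⟨k, hk⟩).symm
      set p := j - i with hp
      have hppos : 0 < p := by omega
      have hov' : ∀ k < m, y (i + k) = y (i + p + k) := by
        intro k hk
        rw [show i + p = j from by omega]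
        exact hovij k hk
      set z : ℕ → A := fun k => if k < i then y k else y (k + p) with hz
      have hz1 : ∀ k < i, z k = y k := by intro k hk; simp [hz, hk]
      have hz2 : ∀ k, i ≤ k → z k = y (k + p) := by
        intro k hk
        have : ¬ (k < i) := by omega
        simp [hz, this]
      have hzX : z ∈ X := by
        apply memX_of_agree hcl
        intro L
        have hovg : ∀ k < m, y (i + k) = shift^[j] y k := by
          intro k hk
          rw [shift_iter, show k + j = j + k from by omega]
          exact hovij k hk
        obtain ⟨x, hxX, hx1, hx2⟩ :=
          glue hm hsft0 hinv hy (iterX hinv y hy j) i hovg L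
        refine ⟨x, hxX, fun k hk => ?_⟩
        rcases Nat.lt_or_ge k i with h' | h'
        · rw [hx1 k h', hz1 k h']
        · rw [show k = i + (k - i) from by omega, hx2 (k - i) (by omega), shift_iter,
            hz2 _ (by omega)]
          congr 1; omega
      have hzwin : ∀ k, shift^[n - p] z k = shift^[n] y k := by
        intro k
        rw [shift_iter, shift_iter, hz2 _ (by omega)]
        congr 1; omega
      -- weight comparison
      have hterm1 : ∀ l < i, f (shift^[l] z) = f (shift^[l] y) := by
        intro l hl
        apply hfm _ (iterX hinv z hzX l) _ (iterX hinv y hy l)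
        intro t ht
        rw [shift_iter, shift_iter]
        rcases Nat.lt_or_ge (t + l) i with h' | h'
        · exact hz1 _ h'
        · rw [hz2 _ h']
          rw [show t + l + p = i + p + (t + l - i) from by omega]
          rw [← hov' (t + l - i) (by omega)]
          congr 1; omega
      have hterm2 : ∀ l, shift^[i + l] z = shift^[i + p + l] y := by
        intro l
        funext t
        rw [shift_iter, shift_iter, hz2 _ (by omega)]
        congr 1; omega
      have hsum : (∑ l ∈ Finset.range (n - p), f (shift^[l] z)) ≤
          ∑ l ∈ Finset.range n, f (shift^[l] y) := by
        have hcycle := cycle_nonneg hcl hm hsft0 hinv f hfm hcyc hy i p hppos hov'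
        have e1 : n - p = i + (n - p - i) := by omega
        have e2 : n = i + (p + (n - p - i)) := by omega
        calc (∑ l ∈ Finset.range (n - p), f (shift^[l] z))
            = (∑ l ∈ Finset.range i, f (shift^[l] z))
              + ∑ l ∈ Finset.range (n - p - i), f (shift^[i + l] z) := by
              rw [← sum_split]; rw [← e1]
          _ = (∑ l ∈ Finset.range i, f (shift^[l] y))
              + ∑ l ∈ Finset.range (n - p - i), f (shift^[i + p + l] y) := by
              congr 1
              · exact Finset.sum_congr rfl fun l hl =>
                  hterm1 l (Finset.mem_range.1 hl)
              · exact Finset.sum_congr rfl fun l _ => by rw [hterm2]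
          _ ≤ (∑ l ∈ Finset.range i, f (shift^[l] y))
              + ((∑ l ∈ Finset.range p, f (shift^[i + l] y))
                + ∑ l ∈ Finset.range (n - p - i), f (shift^[i + p + l] y)) := by
              linarith
          _ = (∑ l ∈ Finset.range i, f (shift^[l] y))
              + ((∑ l ∈ Finset.range p, f (shift^[i + l] y))
                + ∑ l ∈ Finset.range (n - p - i), f (shift^[i + (p + l)] y)) := by
              congr 1
              congr 1
              exact Finset.sum_congr rfl fun l _ => by
                rw [show i + (p + l) = i + p + l from by omega]
          _ = ∑ l ∈ Finset.range n, f (shift^[l] y) := by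
              rw [← sum_split, ← sum_split, ← e2]
      obtain ⟨y2, hy2X, n2, hn2, hwin2, hwt2⟩ := ih (n - p) (by omega) z hzX
      refine ⟨y2, hy2X, n2, hn2, fun k => ?_, le_trans hwt2 hsum⟩
      rw [hwin2 k, hzwin k]

end Reduce


section Cocycle

variable {A : Type*} [TopologicalSpace A] {X : Set (ℕ → A)}

open S15

lemma GX_one (hinv : ∀ x ∈ X, shift x ∈ X) {x : ℕ → A} (hx : x ∈ X) :
    ((x, (1:ℤ), shift x)) ∈ GX X :=
  ⟨hx, hinv x hx, 1, 0, by norm_num, by simp⟩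

lemma GX_iter (hinv : ∀ x ∈ X, shift x ∈ X) {x : ℕ → A} (hx : x ∈ X) (n : ℕ) :
    ((x, (n:ℤ), shift^[n] x)) ∈ GX X :=
  ⟨hx, iterX hinv x hx n, n, 0, by simp, by simp⟩

lemma F_zero {F : (ℕ → A) × ℤ × (ℕ → A) → ℤ} (hF : GrpdHom X F)
    {x : ℕ → A} (hx : x ∈ X) : F (x, 0, x) = 0 := by
  have h0 : ((x, (0:ℤ), x)) ∈ GX X := ⟨hx, hx, 0, 0, by simp, rfl⟩
  have := hF.2.2 x 0 x 0 x h0 h0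
  simp only [add_zero] at this
  omega

lemma F_sum (hinv : ∀ x ∈ X, shift x ∈ X) {F : (ℕ → A) × ℤ × (ℕ → A) → ℤ}
    (hF : GrpdHom X F) {x : ℕ → A} (hx : x ∈ X) (n : ℕ) :
    F (x, (n:ℤ), shift^[n] x) =
      ∑ l ∈ Finset.range n, F (shift^[l] x, 1, shift (shift^[l] x)) := by
  induction n with
  | zero => simpa using F_zero hF hx
  | succ n ih =>
    have h1 := hF.2.2 x n (shift^[n] x) 1 (shift (shift^[n] x))
      (GX_iter hinv hx n) (GX_one hinv (iterX hinv x hx n))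
    rw [Function.iterate_succ_apply']
    rw [show ((n+1 : ℕ):ℤ) = (n:ℤ) + 1 from by push_cast; ring]
    rw [h1, ih, Finset.sum_range_succ]

lemma iter_periodic {x : ℕ → A} {q : ℕ} (hq : shift^[q] x = x) (s : ℕ) :
    shift^[s * q] x = x := by
  induction s with
  | zero => simp
  | succ s ih =>
    rw [show (s+1) * q = s * q + q from by ring, Function.iterate_add_apply, hq, ih]

lemma F_periodic_mul {F : (ℕ → A) × ℤ × (ℕ → A) → ℤ} (hF : GrpdHom X F)
    {x : ℕ → A} (hx : x ∈ X) {q : ℕ} (hq : shift^[q] x = x) (s : ℕ) :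
    F (x, ((s * q : ℕ) : ℤ), x) = (s : ℤ) * F (x, (q : ℤ), x) := by
  induction s with
  | zero => simpa using F_zero hF hx
  | succ s ih =>
    have hGX1 : ((x, ((s * q : ℕ):ℤ), x)) ∈ GX X :=
      ⟨hx, hx, s * q, 0, by simp, by simp [iter_periodic hq s]⟩
    have hGXq : ((x, ((q : ℕ):ℤ), x)) ∈ GX X := ⟨hx, hx, q, 0, by simp, by simp [hq]⟩
    have h1 := hF.2.2 x ((s * q : ℕ):ℤ) x ((q:ℕ):ℤ) x hGX1 hGXq
    rw [show (((s+1) * q : ℕ) : ℤ) = ((s * q : ℕ):ℤ) + ((q : ℕ):ℤ) from by push_cast; ring]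
    rw [h1, ih]
    push_cast
    ring

lemma F_per_nonneg {F : (ℕ → A) × ℤ × (ℕ → A) → ℤ} (hF : GrpdHom X F)
    (hpos : ∀ x ∈ X, EvPeriodic x → 0 ≤ F (x, (leastPeriod x : ℤ), x))
    {x : ℕ → A} (hx : x ∈ X) {p : ℕ} (hp : 0 < p) (hper : shift^[p] x = x) :
    0 ≤ F (x, (p : ℤ), x) := by
  set Sp := {p' | 0 < p' ∧ ∃ a b : ℕ, p' + b = a ∧ shift^[a] x = shift^[b] x} with hSp
  have hpS : p ∈ Sp := ⟨hp, p, 0, by omega, by simpa using hper⟩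
  have hqmem := Nat.sInf_mem (⟨p, hpS⟩ : Sp.Nonempty)
  set q := sInf Sp with hqdef
  obtain ⟨hq0, a, b, hab, hshift⟩ := hqmem
  have hble : b ≤ b * p := Nat.le_mul_of_pos_right b hp
  have hqper : shift^[q] x = x := by
    have h1 : shift^[b * p] x = x := iter_periodic hper b
    have h2 : shift^[q + b] x = shift^[b] x := by rw [hab]; exact hshift
    have h3 : shift^[(b * p - b) + (q + b)] x = shift^[(b * p - b) + b] x := by
      rw [Function.iterate_add_apply, Function.iterate_add_apply (f := shift) (b*p-b) b, h2]
    rw [show (b * p - b) + b = b * p from by omega,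
      show (b * p - b) + (q + b) = q + b * p from by omega] at h3
    rw [Function.iterate_add_apply, h1] at h3
    exact h3
  have hr : p % q = 0 := by
    by_contra hr0
    have h2 : shift^[q * (p / q)] x = x := by
      rw [show q * (p / q) = (p / q) * q from by ring]
      exact iter_periodic hqper (p / q)
    have hmd := Nat.mod_add_div p q
    have h1 : shift^[p % q] x = x := by
      calc shift^[p % q] x = shift^[p % q] (shift^[q * (p/q)] x) := by rw [h2]
        _ = shift^[p % q + q * (p/q)] x := (Function.iterate_add_apply _ _ _ _).symm
        _ = shift^[p] x := by rw [hmd]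
        _ = x := hper
    have hmem : p % q ∈ Sp := ⟨Nat.pos_of_ne_zero hr0, p % q, 0, by omega, by simpa using h1⟩
    have hle := Nat.sInf_le hmem
    have hlt := Nat.mod_lt p hq0
    omega
  have hdvd : (p / q) * q = p := Nat.div_mul_cancel (Nat.dvd_of_mod_eq_zero hr)
  have hm := F_periodic_mul hF hx hqper (p / q)
  rw [hdvd] at hm
  have hEv : EvPeriodic x := ⟨0, p, hp, by simpa using hper⟩
  have hlp : leastPeriod x = q := rfl
  have hF0 := hpos x hx hEv
  rw [hlp] at hF0
  rw [hm]
  exact mul_nonneg (Int.natCast_nonneg _) hF0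

end Cocycle

section Locality

set_option linter.unusedSectionVars false

variable {A : Type*} [Fintype A] [TopologicalSpace A] [DiscreteTopology A] {X : Set (ℕ → A)}

lemma exists_locality (hcl : IsClosed X) (hinv : ∀ x ∈ X, shift x ∈ X)
    (F : (ℕ → A) × ℤ × (ℕ → A) → ℤ) (hF : GrpdHom X F) :
    ∃ m1 : ℕ, ∀ x ∈ X, ∀ y ∈ X, (∀ k < m1, x k = y k) →
      F (x, 1, shift x) = F (y, 1, shift y) := by
  classical
  have hpt : ∀ x ∈ X, ∃ n : ℕ, ∀ y ∈ X, (∀ k < n, y k = x k) →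
      F (y, 1, shift y) = F (x, 1, shift x) := by
    intro x hx
    obtain ⟨S, ⟨i, j, U, U', hU, hU', rfl⟩, hγS, hconst⟩ := hF.1 _ (GX_one hinv hx)
    obtain ⟨hxU, hxU', hij, -⟩ := hγS
    have hij2 : (1:ℤ) = (i:ℤ) - (j:ℤ) := hij
    have hij' : i = j + 1 := by omega
    have hVopen : IsOpen (U ∩ shift ⁻¹' U') := hU.inter (hU'.preimage shift_continuous)
    obtain ⟨I, u, hIu, hsub⟩ := isOpen_pi_iff.1 hVopen x ⟨hxU, hxU'⟩
    refine ⟨I.sup id + 1, fun y hy hag => ?_⟩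
    have hyV : y ∈ U ∩ shift ⁻¹' U' := by
      apply hsub
      intro a ha
      have ha' : a ∈ I := ha
      rw [hag a (Nat.lt_succ_of_le (Finset.le_sup (f := id) ha'))]
      exact (hIu a ha').2
    apply hconst
    refine ⟨⟨hyV.1, hyV.2, hij, ?_⟩, GX_one hinv hy⟩
    rw [hij']
    exact Function.iterate_succ_apply shift j y
  choose! n hn using hpt
  have hXcomp : IsCompact X := hcl.isCompact
  have hcov : X ⊆ ⋃ (x : X), {y : ℕ → A | ∀ k < n x.val, y k = x.val k} := by
    intro x hx
    exact Set.mem_iUnion.2 ⟨⟨x, hx⟩, fun k _ => rfl⟩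
  obtain ⟨t, ht⟩ := hXcomp.elim_finite_subcover
    (fun x : X => {y : ℕ → A | ∀ k < n x.val, y k = x.val k})
    (fun x => cyl_open x.val (n x.val)) hcov
  refine ⟨t.sup (fun i => n i.val), fun x hx y hy hag => ?_⟩
  obtain ⟨i, hit, hxi⟩ := Set.mem_iUnion₂.1 (ht hx)
  have h1 : F (x, 1, shift x) = F (i.val, 1, shift i.val) := hn i.val i.prop x hx hxi
  have h2 : F (y, 1, shift y) = F (i.val, 1, shift i.val) := by
    apply hn i.val i.prop y hy
    intro k hk
    have hkm : k < t.sup (fun i => n i.val) :=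
      lt_of_lt_of_le hk (Finset.le_sup (f := fun i : X => n i.val) hit)
    rw [← hag k hkm]
    exact hxi k hk
  rw [h1, h2]

end Locality

section Core

set_option linter.unusedSectionVars false

variable {A : Type*} [Fintype A] [TopologicalSpace A] [DiscreteTopology A] {X : Set (ℕ → A)}
  {m0 m : ℕ}

lemma core (hcl : IsClosed X) (hinv : ∀ x ∈ X, shift x ∈ X) (hm : m0 ≤ m)
    (hsft0 : ∀ u v w : List A, v.length = m0 →
      Appears X (u ++ v) → Appears X (v ++ w) → Appears X (u ++ v ++ w))
    (f : (ℕ → A) → ℤ)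
    (hfm : ∀ x ∈ X, ∀ y ∈ X, (∀ k < m, x k = y k) → f x = f y)
    (hcyc : ∀ y ∈ X, ∀ p, 0 < p → shift^[p] y = y →
      0 ≤ ∑ l ∈ Finset.range p, f (shift^[l] y)) :
    ∃ h : (ℕ → A) → ℤ, ContinuousOn h X ∧
      ∀ x ∈ X, 0 ≤ f x + h x - h (shift x) := by
  classical
  rcases X.eq_empty_or_nonempty with hXe | ⟨x0, hx0⟩
  · exact ⟨0, continuousOn_const, by simp [hXe]⟩
  have hA : Nonempty (Fin m → A) := ⟨fun _ => x0 0⟩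
  set N := Fintype.card (Fin m → A) with hN
  obtain ⟨B, hB0, hB⟩ : ∃ B : ℤ, 0 ≤ B ∧ ∀ y ∈ X, -B ≤ f y := by
    set c : (Fin m → A) → ℤ := fun v =>
      if h : ∃ y, y ∈ X ∧ ∀ k : Fin m, y (k : ℕ) = v k then f h.choose else 0 with hc
    refine ⟨Finset.univ.sup' Finset.univ_nonempty (fun v => |c v|), ?_, ?_⟩
    · exact le_trans (abs_nonneg (c (Classical.arbitrary (Fin m → A))))
        (Finset.le_sup' (fun v => |c v|) (Finset.mem_univ (Classical.arbitrary (Fin m → A))))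
    · intro y hy
      have hex : ∃ y', y' ∈ X ∧ ∀ k : Fin m, y' (k : ℕ) = (fun k : Fin m => y (k : ℕ)) k :=
        ⟨y, hy, fun _ => rfl⟩
      have hceq : c (fun k : Fin m => y (k : ℕ)) = f y := by
        rw [hc]
        simp only [dif_pos hex]
        exact hfm _ hex.choose_spec.1 _ hy (fun k hk => hex.choose_spec.2 ⟨k, hk⟩)
      have h1 := Finset.le_sup' (fun v => |c v|)
        (Finset.mem_univ (fun k : Fin m => y (k : ℕ)))
      rw [hceq] at h1
      have := abs_le.1 (le_of_eq (rfl : |f y| = |f y|))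
      have h2 : -|f y| ≤ f y := neg_abs_le (f y)
      linarith
  set S : (Fin m → A) → Set ℤ := fun v => {z | ∃ y, y ∈ X ∧ ∃ n, n ≤ N ∧
    (∀ k : Fin m, shift^[n] y (k : ℕ) = v k) ∧
    z = ∑ l ∈ Finset.range n, f (shift^[l] y)} with hS
  have hbdd : ∀ v, BddBelow (S v) := by
    intro v
    refine ⟨-(N * B), ?_⟩
    rintro z ⟨y, hy, n, hn, -, rfl⟩
    have h1 : ∀ l ∈ Finset.range n, -B ≤ f (shift^[l] y) :=
      fun l _ => hB _ (iterX hinv y hy l)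
    calc -((N:ℤ) * B) ≤ -((n:ℤ) * B) := by
          have h2 : (n:ℤ) ≤ N := by exact_mod_cast hn
          nlinarith
      _ = ∑ _l ∈ Finset.range n, (-B) := by
          rw [Finset.sum_const, Finset.card_range]
          push_cast
          ring
      _ ≤ _ := Finset.sum_le_sum h1
  set g : (Fin m → A) → ℤ := fun v => sInf (S v) with hg
  have hmemS : ∀ x ∈ X, (0:ℤ) ∈ S (fun k : Fin m => x (k : ℕ)) :=
    fun x hx => ⟨x, hx, 0, Nat.zero_le _, fun _ => rfl, by simp⟩
  refine ⟨fun x => g (fun k : Fin m => x (k : ℕ)), ?_, ?_⟩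
  · apply Continuous.continuousOn
    have hgc : Continuous g := continuous_of_discreteTopology
    exact hgc.comp (continuous_pi fun i => continuous_apply (i : ℕ))
  · intro x hx
    have key : ∀ z ∈ S (fun k : Fin m => x (k : ℕ)),
        sInf (S (fun k : Fin m => shift x (k : ℕ))) ≤ f x + z := by
      rintro z ⟨y, hy, n, hn, hwin, rfl⟩
      have hov : ∀ k < m, y (n + k) = x k := by
        intro k hk
        have := hwin ⟨k, hk⟩
        rw [shift_iter] at this
        rw [show n + k = k + n from by omega]
        exact this
      obtain ⟨x', hx'X, hx'1, hx'2⟩ := glue hm hsft0 hinv hy hx n hov 1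
      have hwt : ∑ l ∈ Finset.range (n+1), f (shift^[l] x')
          = (∑ l ∈ Finset.range n, f (shift^[l] y)) + f x := by
        rw [Finset.sum_range_succ]
        congr 1
        · apply Finset.sum_congr rfl
          intro l hl
          have hl' := Finset.mem_range.1 hl
          apply hfm _ (iterX hinv _ hx'X l) _ (iterX hinv _ hy l)
          intro t ht
          rw [shift_iter, shift_iter]
          rcases Nat.lt_or_ge (t + l) n with h' | h'
          · exact hx'1 _ h'
          · rw [show t + l = n + (t + l - n) from by omega, hx'2 _ (by omega)]
            rw [← hov (t + l - n) (by omega)]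
        · apply hfm _ (iterX hinv _ hx'X n) _ hx
          intro t ht
          rw [shift_iter, show t + n = n + t from by omega, hx'2 t (by omega)]
      obtain ⟨y2, hy2X, n2, hn2, hwin2, hwt2⟩ :=
        reduce hcl hm hsft0 hinv f hfm hcyc (n+1) x' hx'X
      have hz2 : (∑ l ∈ Finset.range n2, f (shift^[l] y2))
          ∈ S (fun k : Fin m => shift x (k : ℕ)) := by
        refine ⟨y2, hy2X, n2, hn2, fun k => ?_, rfl⟩
        rw [hwin2 (k : ℕ), shift_iter]
        rw [show (k : ℕ) + (n + 1) = n + ((k : ℕ) + 1) from by omega,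
          hx'2 ((k : ℕ) + 1) (by omega)]
        rfl
      have h3 := csInf_le (hbdd _) hz2
      rw [hwt] at hwt2
      linarith
    have h4 : sInf (S (fun k : Fin m => shift x (k : ℕ))) - f x
        ≤ sInf (S (fun k : Fin m => x (k : ℕ))) :=
      le_csInf ⟨0, hmemS x hx⟩ (fun z hz => by linarith [key z hz])
    have h5 : g (fun k : Fin m => x (k : ℕ)) = sInf (S (fun k : Fin m => x (k : ℕ))) := rfl
    have h6 : g (fun k : Fin m => shift x (k : ℕ))
        = sInf (S (fun k : Fin m => shift x (k : ℕ))) := rfl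
    show (0:ℤ) ≤ f x + g (fun k : Fin m => x (k : ℕ)) - g (fun k : Fin m => shift x (k : ℕ))
    rw [h5, h6]
    linarith
  
end Core

end S15

open S15 in
/-- If `f ∈ Hom(𝒢_X, ℤ)` satisfies `f((x, lp(x), x)) ≥ 0` for every eventually
periodic `x ∈ X`, then the class of `x ↦ f((x, 1, σ(x)))` lies in the positive
cone `H^X_+`: there is a continuous `h : X → ℤ` with
`f((x, 1, σ(x))) + h(x) - h(σ(x)) ≥ 0` on `X`. -/
theorem stmt15 {A : Type*} [Fintype A] [TopologicalSpace A] [DiscreteTopology A]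
    (X : Set (ℕ → A)) (hcl : IsClosed X) (hinv : shift '' X = X) (hsft : IsSFT X)
    (F : (ℕ → A) × ℤ × (ℕ → A) → ℤ) (hF : GrpdHom X F)
    (hpos : ∀ x ∈ X, EvPeriodic x → 0 ≤ F (x, (leastPeriod x : ℤ), x)) :
    ∃ h : (ℕ → A) → ℤ, ContinuousOn h X ∧
      ∀ x ∈ X, 0 ≤ F (x, 1, shift x) + h x - h (shift x) := by
  classical
  obtain ⟨m0, hm0pos, hsft0⟩ := hsft
  have hinv' : ∀ x ∈ X, shift x ∈ X := fun x hx => hinv ▸ Set.mem_image_of_mem shift hx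
  obtain ⟨m1, hfm1⟩ := exists_locality hcl hinv' F hF
  set f : (ℕ → A) → ℤ := fun x => F (x, 1, shift x) with hf
  have hfm : ∀ x ∈ X, ∀ y ∈ X, (∀ k < max m0 m1, x k = y k) → f x = f y :=
    fun x hx y hy hag =>
      hfm1 x hx y hy (fun k hk => hag k (lt_of_lt_of_le hk (le_max_right _ _)))
  have hcyc : ∀ y ∈ X, ∀ p, 0 < p → shift^[p] y = y →
      0 ≤ ∑ l ∈ Finset.range p, f (shift^[l] y) := by
    intro y hy p hp hper
    have h1 := F_sum hinv' hF hy p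
    rw [hper] at h1
    rw [← h1]
    exact F_per_nonneg hF hpos hy hp hper
  obtain ⟨h, hc, hineq⟩ := core hcl hinv' (le_max_left m0 m1) hsft0 f hfm hcyc
  exact ⟨h, hc, fun x hx => hineq x hx⟩
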